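/- arXiv:2004.07781 — 2 statements merged into one kernel-verified Lean document; each statement's English description precedes it below -/
import Mathlib

section
/- Let A be a symmetric positive semidefinite block matrix A = [[L, X],[Xᵀ, M]] with L ∈ ℝ^{m×m}, M ∈ ℝ^{n×n}, X ∈ ℝ^{m×n}. Then ‖X‖_F² ≤ ‖L‖_F ‖M‖_F. -/
open Matrix

lemma sum4_comm {α β γ δ : Type*} [Fintype α] [Fintype β] [Fintype γ] [Fintype δ]
    (t : α → β → γ → δ → ℝ) :
    ∑ a, ∑ b, ∑ c, ∑ d, t a b c d = ∑ c, ∑ d, ∑ a, ∑ b, t a b c d := by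
  rw [show (∑ a, ∑ b, ∑ c, ∑ d, t a b c d) = ∑ a, ∑ c, ∑ b, ∑ d, t a b c d from
    Finset.sum_congr rfl fun a _ => Finset.sum_comm ..]
  rw [Finset.sum_comm]
  refine Finset.sum_congr rfl fun c _ => ?_
  rw [show (∑ a, ∑ b, ∑ d, t a b c d) = ∑ a, ∑ d, ∑ b, t a b c d from
    Finset.sum_congr rfl fun a _ => Finset.sum_comm ..]
  exact Finset.sum_comm ..

lemma aux_swap {ι κ₁ κ₂ : Type*} [Fintype ι] [Fintype κ₁] [Fintype κ₂]
    (f : κ₁ → ι → ℝ) (g : κ₂ → ι → ℝ) :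
    ∑ i, ∑ j, (∑ k, f i k * g j k) ^ 2
      = ∑ k, ∑ l, (∑ i, f i k * f i l) * (∑ j, g j k * g j l) := by
  simp_rw [sq, Finset.sum_mul_sum, mul_mul_mul_comm]
  exact sum4_comm _

/-- For a symmetric positive semidefinite block matrix `[[L, X], [Xᵀ, M]]`, the
off-diagonal block satisfies `‖X‖_F² ≤ ‖L‖_F ‖M‖_F`. -/
theorem stmt_11 (m n : ℕ) (L : Matrix (Fin m) (Fin m) ℝ) (M : Matrix (Fin n) (Fin n) ℝ)
    (X : Matrix (Fin m) (Fin n) ℝ)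
    (h : (Matrix.fromBlocks L X X.transpose M).PosSemidef) :
    (∑ i, ∑ j, X i j ^ 2) ≤
      Real.sqrt (∑ i, ∑ j, L i j ^ 2) * Real.sqrt (∑ i, ∑ j, M i j ^ 2) := by
  obtain ⟨B, hB⟩ : ∃ B : Matrix (Fin m ⊕ Fin n) (Fin m ⊕ Fin n) ℝ,
      Matrix.fromBlocks L X X.transpose M = Bᴴ * B := by
    open scoped MatrixOrder Matrix.Norms.L2Operator in
    exact CStarAlgebra.nonneg_iff_eq_star_mul_self.mp h.nonneg
  set u : Fin m → (Fin m ⊕ Fin n) → ℝ := fun i k => B k (Sum.inl i) with hu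
  set v : Fin n → (Fin m ⊕ Fin n) → ℝ := fun j k => B k (Sum.inr j) with hv
  have hL : ∀ i j, L i j = ∑ k, u i k * u j k := by
    intro i j
    have := congrFun (congrFun hB (Sum.inl i)) (Sum.inl j)
    simpa [Matrix.mul_apply, Matrix.conjTranspose_apply, hu] using this
  have hX : ∀ i j, X i j = ∑ k, u i k * v j k := by
    intro i j
    have := congrFun (congrFun hB (Sum.inl i)) (Sum.inr j)
    simpa [Matrix.mul_apply, Matrix.conjTranspose_apply, hu, hv] using this
  have hM : ∀ i j, M i j = ∑ k, v i k * v j k := by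
    intro i j
    have := congrFun (congrFun hB (Sum.inr i)) (Sum.inr j)
    simpa [Matrix.mul_apply, Matrix.conjTranspose_apply, hv] using this
  set G : (Fin m ⊕ Fin n) → (Fin m ⊕ Fin n) → ℝ := fun k l => ∑ i, u i k * u i l with hG
  set H : (Fin m ⊕ Fin n) → (Fin m ⊕ Fin n) → ℝ := fun k l => ∑ j, v j k * v j l with hH
  have eX : (∑ i, ∑ j, X i j ^ 2) = ∑ k, ∑ l, G k l * H k l := by
    simp_rw [hX]; exact aux_swap u v
  have eL : (∑ i, ∑ j, L i j ^ 2) = ∑ k, ∑ l, G k l ^ 2 := by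
    simp_rw [hL]; rw [aux_swap u u]; simp only [hG, sq]
  have eM : (∑ i, ∑ j, M i j ^ 2) = ∑ k, ∑ l, H k l ^ 2 := by
    simp_rw [hM]; rw [aux_swap v v]; simp only [hH, sq]
  rw [eX, eL, eM]
  have := Real.sum_mul_le_sqrt_mul_sqrt (Finset.univ : Finset ((Fin m ⊕ Fin n) × (Fin m ⊕ Fin n)))
    (fun p => G p.1 p.2) (fun p => H p.1 p.2)
  simpa [Fintype.sum_prod_type] using this
end

section
/- (Lasso error bound under restricted eigenvalue) In the setting of the preceding cone condition, suppose additionally that Γ̂ = n⁻¹ZᵀZ satisfies θᵀΓ̂θ ≥ τ₂‖θ‖₂² − τ₁‖θ‖₁² for all θ with τ₂ ≥ 32 τ₁ s, where s = |S| and on the cone ‖Δ‖₁ ≤ 4√s‖Δ‖_F. Then the minimizer's error satisfies ‖Δ‖_F ≤ 24 √s λ / τ₂ and ‖Δ‖₁ ≤ 96 s λ / τ₂. -/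
open Matrix

/-- Lasso error bound under a restricted eigenvalue condition: if `Γ̂` satisfies
`θᵀΓ̂θ ≥ τ₂‖θ‖₂² − τ₁‖θ‖₁²` for all `θ`, with `τ₂ ≥ 32 τ₁ s` where `s = |S|`, the error
`Δ` lies in the cone `‖Δ‖₁ ≤ 4√s ‖Δ‖₂`, and the basic inequality
`(1/2) ΔᵀΓ̂Δ ≤ (3λ/2) ‖Δ_S‖₁` holds, then `‖Δ‖₂ ≤ 24 √s λ / τ₂` and
`‖Δ‖₁ ≤ 96 s λ / τ₂`. -/
theorem stmt_14 (N : ℕ) (Γhat : Matrix (Fin N) (Fin N) ℝ) (S : Finset (Fin N))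
    (Δ : Fin N → ℝ) (τ₁ τ₂ lam : ℝ)
    (hτ₁ : 0 ≤ τ₁) (hτ₂ : 0 < τ₂) (hlam : 0 ≤ lam)
    (hRE : ∀ θ : Fin N → ℝ,
      τ₂ * (∑ i, θ i ^ 2) - τ₁ * (∑ i, |θ i|) ^ 2 ≤ θ ⬝ᵥ Γhat.mulVec θ)
    (hτ : 32 * τ₁ * (S.card : ℝ) ≤ τ₂)
    (hcone : ∑ i, |Δ i| ≤ 4 * Real.sqrt (S.card : ℝ) * Real.sqrt (∑ i, Δ i ^ 2))
    (hbasic : (1 / 2 : ℝ) * (Δ ⬝ᵥ Γhat.mulVec Δ) ≤ (3 * lam / 2) * ∑ i ∈ S, |Δ i|) :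
    Real.sqrt (∑ i, Δ i ^ 2) ≤ 24 * Real.sqrt (S.card : ℝ) * lam / τ₂ ∧
      ∑ i, |Δ i| ≤ 96 * (S.card : ℝ) * lam / τ₂ := by
  set F := Real.sqrt (∑ i, Δ i ^ 2) with hFdef
  set r := Real.sqrt (S.card : ℝ) with hrdef
  set L := ∑ i, |Δ i| with hLdef
  have hF0 : 0 ≤ F := Real.sqrt_nonneg _
  have hr0 : 0 ≤ r := Real.sqrt_nonneg _
  have hsum0 : 0 ≤ ∑ i, Δ i ^ 2 := Finset.sum_nonneg fun i _ => sq_nonneg _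
  have hFsq : F ^ 2 = ∑ i, Δ i ^ 2 := Real.sq_sqrt hsum0
  have hrsq : r ^ 2 = (S.card : ℝ) := Real.sq_sqrt (by positivity)
  have hL0 : 0 ≤ L := Finset.sum_nonneg fun i _ => abs_nonneg _
  have hLsub : ∑ i ∈ S, |Δ i| ≤ L :=
    Finset.sum_le_sum_of_subset_of_nonneg (Finset.subset_univ S)
      (fun i _ _ => abs_nonneg _)
  have hRE' := hRE Δ
  -- L² ≤ 16 s F²
  have hLsq : L ^ 2 ≤ 16 * (S.card : ℝ) * F ^ 2 := by
    have := mul_self_le_mul_self hL0 hcone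
    nlinarith [sq_nonneg (r * F)]
  -- τ₁ * 16 * s ≤ τ₂ / 2
  have hkey : τ₂ * F ^ 2 ≤ 24 * r * lam * F := by
    have h1 : τ₂ * F ^ 2 - τ₁ * L ^ 2 ≤ 3 * lam * L := by
      rw [hFsq]
      nlinarith [hRE', hbasic, mul_le_mul_of_nonneg_left hLsub (by positivity : (0:ℝ) ≤ 3 * lam)]
    have h2 : τ₁ * L ^ 2 ≤ (τ₂ / 2) * F ^ 2 := by
      nlinarith [mul_le_mul_of_nonneg_left hLsq hτ₁, sq_nonneg F]
    have h3 : L ≤ 4 * r * F := hcone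
    nlinarith [mul_le_mul_of_nonneg_left h3 (by positivity : (0:ℝ) ≤ 3 * lam)]
  have hmain : F ≤ 24 * r * lam / τ₂ := by
    rcases eq_or_lt_of_le hF0 with h | h
    · rw [← h]; positivity
    · rw [le_div_iff₀ hτ₂]
      have := (mul_le_mul_iff_left₀ h).mpr (le_refl F)
      nlinarith
  refine ⟨hmain, ?_⟩
  calc L ≤ 4 * r * F := hcone
    _ ≤ 4 * r * (24 * r * lam / τ₂) := by
        apply mul_le_mul_of_nonneg_left hmain (by positivity)
    _ = 96 * (r ^ 2) * lam / τ₂ := by ring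
    _ = 96 * (S.card : ℝ) * lam / τ₂ := by rw [hrsq]
end
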